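/- Let M and N be von Neumann algebras (or more generally unital C*-algebras) and S : M → N a unital completely positive bijection whose inverse is also completely positive. Then S is a Jordan *-homomorphism, i.e., S(x*) = S(x)* and S(xy + yx) = S(x)S(y) + S(y)S(x) for all x, y. -/

import Mathlib

set_option maxHeartbeats 1000000


/-- A map between (non-unital) star rings is *completely positive* if, for every `k`, the
entrywise application to `k × k` matrices sends positive matrices (i.e. those of the form
`star b * b` in the matrix C*-algebra) to positive matrices. -/
def IsCompletelyPositive {M N : Type*} [NonUnitalRing M] [StarRing M]
    [NonUnitalRing N] [StarRing N] (S : M → N) : Prop :=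
  ∀ (k : ℕ) (m : Matrix (Fin k) (Fin k) M),
    (∃ b : Matrix (Fin k) (Fin k) M, m = star b * b) →
    ∃ c : Matrix (Fin k) (Fin k) N, m.map S = star c * c


lemma schwarz_identity {N : Type*} [Ring N] [StarRing N] (u v w z s : N)
    (hu : star u * u + star v * v = 1) (hs : s = star u * w + star v * z) :
    star w * w + star z * z - star s * s
      = star (w - u*s) * (w - u*s) + star (z - v*s) * (z - v*s) := by
  have hs' : star s = star w * u + star z * v := by
    rw [hs]; simp [star_add, star_mul]
  have e1 : star (w - u*s) * (w - u*s)
      = star w * w - star w * (u*s) - star s * (star u * w) + star s * (star u * u * s) := by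
    simp only [star_sub, star_mul]
    noncomm_ring
  have e2 : star (z - v*s) * (z - v*s)
      = star z * z - star z * (v*s) - star s * (star v * z) + star s * (star v * v * s) := by
    simp only [star_sub, star_mul]
    noncomm_ring
  rw [e1, e2]
  symm
  have h3 : star w * (u*s) + star z * (v*s) = star s * s := by
    rw [hs', add_mul]; noncomm_ring
  have h4 : star s * (star u * w) + star s * (star v * z) = star s * s := by
    rw [← mul_add, ← hs]
  have h5 : star s * (star u * u * s) + star s * (star v * v * s) = star s * s := by
    rw [← mul_add, ← add_mul, hu, one_mul]
  calc star w * w - star w * (u * s) - star s * (star u * w) + star s * (star u * u * s) +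
      (star z * z - star z * (v * s) - star s * (star v * z) + star s * (star v * v * s))
      = star w * w + star z * z - (star w * (u*s) + star z * (v*s))
        - (star s * (star u * w) + star s * (star v * z))
        + (star s * (star u * u * s) + star s * (star v * v * s)) := by abel
    _ = star w * w + star z * z - star s * s := by rw [h3, h4, h5]; abel

lemma cp_schwarz {M N : Type*} [CStarAlgebra M] [CStarAlgebra N]
    [PartialOrder N] [StarOrderedRing N]
    (f : M → N) (hf1 : f 1 = 1) (hcp : IsCompletelyPositive f) (a : M) :
    f (star a) = star (f a) ∧ star (f a) * f a ≤ f (star a * a) := by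
  have hmb : (!![(1:M), a; star a, star a * a]) = star (!![(1:M), a; 0, 0]) * (!![(1:M), a; 0, 0]) := by
    ext i j
    fin_cases i <;> fin_cases j <;>
      simp [Matrix.mul_apply, Fin.sum_univ_two, Matrix.star_eq_conjTranspose,
        Matrix.conjTranspose_apply]
  obtain ⟨c, hc⟩ := hcp 2 _ ⟨_, hmb⟩
  have key : ∀ i j, f (!![(1:M), a; star a, star a * a] i j)
      = star (c 0 i) * c 0 j + star (c 1 i) * c 1 j := by
    intro i j
    have := congrFun (congrFun hc i) j
    simpa [Matrix.map_apply, Matrix.mul_apply, Fin.sum_univ_two,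
      Matrix.star_eq_conjTranspose, Matrix.conjTranspose_apply] using this
  have hu : star (c 0 0) * c 0 0 + star (c 1 0) * c 1 0 = 1 := by
    have := key 0 0
    simp [hf1] at this
    exact this.symm
  have hsa : f a = star (c 0 0) * c 0 1 + star (c 1 0) * c 1 1 := by
    have := key 0 1
    simpa using this
  have hAA : f (star a * a) = star (c 0 1) * c 0 1 + star (c 1 1) * c 1 1 := by
    have := key 1 1
    simpa using this
  have hst : f (star a) = star (c 0 1) * c 0 0 + star (c 1 1) * c 1 0 := by
    have := key 1 0
    simpa using this
  constructor
  · rw [hst, hsa]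
    simp [star_add, star_mul]
  · rw [← sub_nonneg, hAA,
      schwarz_identity (c 0 0) (c 1 0) (c 0 1) (c 1 1) (f a) hu hsa]
    exact add_nonneg (star_mul_self_nonneg _) (star_mul_self_nonneg _)

lemma cp_pos {M N : Type*} [CStarAlgebra M] [CStarAlgebra N]
    [PartialOrder N] [StarOrderedRing N]
    (f : M → N) (hcp : IsCompletelyPositive f) (x r : M) (hx : x = star r * r) :
    0 ≤ f x := by
  obtain ⟨c, hc⟩ := hcp 1 (Matrix.of fun _ _ => x)
    ⟨Matrix.of fun _ _ => r, by
      ext i j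
      simp [Matrix.mul_apply, Matrix.star_eq_conjTranspose, Matrix.conjTranspose_apply, hx]⟩
  have := congrFun (congrFun hc 0) 0
  simp only [Matrix.map_apply, Matrix.mul_apply, Fin.sum_univ_one,
    Matrix.star_eq_conjTranspose, Matrix.conjTranspose_apply, Matrix.of_apply] at this
  rw [this]
  exact star_mul_self_nonneg _

lemma exists_star_mul_self {A : Type*} [CStarAlgebra A] (x : A)
    (h₁ : IsSelfAdjoint x) (h₂ : SpectrumRestricts x ContinuousMap.realToNNReal) :
    ∃ r : A, x = star r * r := by
  obtain ⟨s, hs, -, hx⟩ := CFC.exists_sqrt_of_isSelfAdjoint_of_quasispectrumRestricts h₁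
    (quasispectrumRestricts_iff_spectrumRestricts.mpr h₂)
  exact ⟨s, by rw [hs.star_eq, hx]⟩

/-- Let `M` and `N` be unital C*-algebras and `S : M → N` a unital (linear)
completely positive bijection whose inverse is also completely positive.  Then `S` is a
Jordan *-homomorphism: `S (x*) = (S x)*` and `S (xy + yx) = S x S y + S y S x`. -/
theorem jordan_star_hom_of_cp_order_iso
    {M N : Type*} [CStarAlgebra M] [CStarAlgebra N]
    (S : M ≃ₗ[ℂ] N) (hS1 : S 1 = 1)
    (hcp : IsCompletelyPositive ⇑S) (hcpinv : IsCompletelyPositive ⇑S.symm) :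
    (∀ x : M, S (star x) = star (S x)) ∧
    (∀ x y : M, S (x * y + y * x) = S x * S y + S y * S x) := by
  letI : PartialOrder M := CStarAlgebra.spectralOrder M
  haveI : StarOrderedRing M := CStarAlgebra.spectralOrderedRing M
  letI : PartialOrder N := CStarAlgebra.spectralOrder N
  haveI : StarOrderedRing N := CStarAlgebra.spectralOrderedRing N
  have hS1' : S.symm 1 = 1 := by rw [← hS1, LinearEquiv.symm_apply_apply]
  have hstar : ∀ a : M, S (star a) = star (S a) := fun a =>
    (cp_schwarz (⇑S) hS1 hcp a).1
  have hmono : ∀ x y : M, x ≤ y → S x ≤ S y := by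
    intro x y h
    obtain ⟨r, hr⟩ := exists_star_mul_self (y - x) h.1 h.2
    have h0 : (0 : N) ≤ S (y - x) := cp_pos (⇑S) hcp _ r hr
    rw [map_sub] at h0
    exact sub_nonneg.mp h0
  have heq : ∀ a : M, S (star a * a) = star (S a) * S a := by
    intro a
    have le₁ := (cp_schwarz (⇑S) hS1 hcp a).2
    have le₂ := (cp_schwarz (⇑S.symm) hS1' hcpinv (S a)).2
    rw [LinearEquiv.symm_apply_apply] at le₂
    have le₃ := hmono _ _ le₂
    rw [LinearEquiv.apply_symm_apply] at le₃
    exact le_antisymm le₃ le₁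
  have hpol : ∀ a b : M, S (star a * b + star b * a)
      = star (S a) * S b + star (S b) * S a := by
    intro a b
    have e : star a * b + star b * a
        = star (a + b) * (a + b) - star a * a - star b * b := by
      simp only [star_add, add_mul, mul_add]
      abel
    rw [e, map_sub, map_sub, heq, heq, heq, map_add, star_add, add_mul, mul_add, mul_add]
    abel
  have hjsa : ∀ h k : M, IsSelfAdjoint h → IsSelfAdjoint k →
      S (h * k + k * h) = S h * S k + S k * S h := by
    intro h k hh hk
    have hp := hpol h k
    rw [hh.star_eq, hk.star_eq, ← hstar h, ← hstar k, hh.star_eq, hk.star_eq] at hp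
    exact hp
  refine ⟨hstar, fun x y => ?_⟩
  obtain ⟨h1, h2, hh1, hh2, hx⟩ :
      ∃ h1 h2 : M, IsSelfAdjoint h1 ∧ IsSelfAdjoint h2 ∧ h1 + Complex.I • h2 = x :=
    ⟨realPart x, imaginaryPart x, (realPart x).2, (imaginaryPart x).2, realPart_add_I_smul_imaginaryPart x⟩
  obtain ⟨k1, k2, hk1, hk2, hy⟩ :
      ∃ k1 k2 : M, IsSelfAdjoint k1 ∧ IsSelfAdjoint k2 ∧ k1 + Complex.I • k2 = y :=
    ⟨realPart y, imaginaryPart y, (realPart y).2, (imaginaryPart y).2, realPart_add_I_smul_imaginaryPart y⟩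
  rw [← hx, ← hy]
  have e : (h1 + Complex.I • h2) * (k1 + Complex.I • k2)
      + (k1 + Complex.I • k2) * (h1 + Complex.I • h2)
      = ((h1 * k1 + k1 * h1) + Complex.I • (h1 * k2 + k2 * h1)
        + Complex.I • (h2 * k1 + k1 * h2)) - (h2 * k2 + k2 * h2) := by
    simp only [mul_add, add_mul, smul_mul_assoc, mul_smul_comm, smul_smul,
      Complex.I_mul_I, neg_smul, one_smul]
    match_scalars <;> simp [Complex.I_sq] <;> ring
  rw [e, map_sub, map_add, map_add, map_smul, map_smul,
    hjsa h1 k1 hh1 hk1, hjsa h1 k2 hh1 hk2, hjsa h2 k1 hh2 hk1, hjsa h2 k2 hh2 hk2,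
    map_add, map_add, map_smul, map_smul]
  simp only [mul_add, add_mul, smul_mul_assoc, mul_smul_comm, smul_smul,
    Complex.I_mul_I, neg_smul, one_smul]
  match_scalars <;> simp [Complex.I_sq] <;> ring
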